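/- Let t be an indeterminate and X a variable. Set X' = 2(X-2)(X^2 + 2Xt - 1)(2X^2 - 2Xt - 2X + t)/(X(X-1)^2) and s = -2t^2 - 2 - X'/4 - 5t/2. Then Brumer's polynomial Bru(t,s;X) = X^5 + (t-3)X^4 - (t-s-3)X^3 + (t^2 - t - 2s - 1)X^2 + sX + t vanishes identically; equivalently, X(X-1)^2 · Bru(t, s; X) = 0 as an identity of rational functions in t and X. -/
import Mathlib


/-- The field `ℚ(t, X)` realized as `RatFunc (RatFunc ℚ)`,
with `t` the inner variable and `X` the outer variable. -/
noncomputable abbrev K2 : Type := RatFunc (RatFunc ℚ)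

noncomputable def tv : K2 := RatFunc.C RatFunc.X

noncomputable def Xv : K2 := RatFunc.X

/-- The isogeny formula `X' = 2(X-2)(X²+2Xt-1)(2X²-2Xt-2X+t)/(X(X-1)²)`. -/
noncomputable def Xp : K2 :=
  2 * (Xv - 2) * (Xv ^ 2 + 2 * Xv * tv - 1) * (2 * Xv ^ 2 - 2 * Xv * tv - 2 * Xv + tv) /
    (Xv * (Xv - 1) ^ 2)

/-- `s = -2t² - 2 - X'/4 - 5t/2`. -/
noncomputable def sv : K2 := -2 * tv ^ 2 - 2 - Xp / 4 - 5 / 2 * tv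

/-- Brumer's polynomial `Bru(t, s; X)` vanishes identically under the substitution
`s = -2t² - 2 - X'/4 - 5t/2`. -/
theorem brumer_vanishes :
    Xv ^ 5 + (tv - 3) * Xv ^ 4 - (tv - sv - 3) * Xv ^ 3 +
      (tv ^ 2 - tv - 2 * sv - 1) * Xv ^ 2 + sv * Xv + tv = 0 := by
  have h0 : Xv ≠ 0 := RatFunc.X_ne_zero
  have h1 : Xv - 1 ≠ 0 := by
    have : (RatFunc.X : K2) - RatFunc.C 1 ≠ 0 := by
      rw [← RatFunc.algebraMap_X, ← RatFunc.algebraMap_C, ← map_sub]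
      exact RatFunc.algebraMap_ne_zero (Polynomial.X_sub_C_ne_zero 1)
    simpa [Xv] using this
  have hd : Xv * (Xv - 1) ^ 2 ≠ 0 := mul_ne_zero h0 (pow_ne_zero _ h1)
  have hXp : Xp * (Xv * (Xv - 1) ^ 2) =
      2 * (Xv - 2) * (Xv ^ 2 + 2 * Xv * tv - 1) *
        (2 * Xv ^ 2 - 2 * Xv * tv - 2 * Xv + tv) := by
    rw [Xp]; exact div_mul_cancel₀ _ hd
  have hCC : ∀ q : ℚ, q ≠ 0 → (RatFunc.C (RatFunc.C q) : K2) ≠ 0 := by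
    intro q hq h
    exact hq (((RatFunc.C : RatFunc ℚ →+* K2).comp (RatFunc.C : ℚ →+* RatFunc ℚ)).injective
      (by simpa using h))
  have h4ne : (4 : K2) ≠ 0 := by
    have : (RatFunc.C (RatFunc.C (4:ℚ)) : K2) = 4 := by simp [map_ofNat]
    rw [← this]; exact hCC 4 (by norm_num)
  have h2ne : (2 : K2) ≠ 0 := by
    have : (RatFunc.C (RatFunc.C (2:ℚ)) : K2) = 2 := by simp [map_ofNat]
    rw [← this]; exact hCC 2 (by norm_num)
  have key : (4 : K2) * (Xv ^ 5 + (tv - 3) * Xv ^ 4 - (tv - sv - 3) * Xv ^ 3 +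
      (tv ^ 2 - tv - 2 * sv - 1) * Xv ^ 2 + sv * Xv + tv) = 0 := by
    rw [sv]
    have h4 : (4 : K2) * ((4:K2)⁻¹) = 1 := mul_inv_cancel₀ h4ne
    have h2 : (2 : K2) * ((2:K2)⁻¹) = 1 := mul_inv_cancel₀ h2ne
    linear_combination (-(1 : K2)) * hXp +
      (- Xv*(Xv-1)^2*Xp) * h4 + (-10*tv*Xv*(Xv-1)^2) * h2
  exact (mul_eq_zero.mp key).resolve_left h4ne
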